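/- Let g: 𝔻 → ℂ be holomorphic with g(0) = 1 and |g(w)| ≤ eᴮ for all w ∈ 𝔻, for some B > 0. Then the zeros of g (counted with multiplicity) satisfy the Blaschke condition: ∑_{w: g(w)=0} (1 − |w|) ≤ B. -/

import Mathlib

open Complex Metric Filter

def Vanish (g : ℂ → ℂ) (w : ℂ) (m : ℕ) : Prop :=
  ∃ h : ℂ → ℂ, AnalyticAt ℂ h w ∧ ∀ᶠ z in nhdsWithin w {w}ᶜ, g z = (z - w) ^ m * h z

lemma vanish_zero {g : ℂ → ℂ} {w : ℂ} {m : ℕ} (hm : 1 ≤ m)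
    (hc : ContinuousAt g w) (hv : Vanish g w m) : g w = 0 := by
  obtain ⟨h, hh, hev⟩ := hv
  have h1 : Filter.Tendsto g (nhdsWithin w {w}ᶜ) (nhds (g w)) :=
    (hc.tendsto).mono_left nhdsWithin_le_nhds
  have h2 : Filter.Tendsto (fun z => (z - w) ^ m * h z) (nhdsWithin w {w}ᶜ)
      (nhds ((w - w) ^ m * h w)) := by
    apply Filter.Tendsto.mono_left _ nhdsWithin_le_nhds
    exact ((continuousAt_id.sub continuousAt_const).pow m).mul hh.continuousAt
  have h3 : Filter.Tendsto g (nhdsWithin w {w}ᶜ) (nhds ((w - w) ^ m * h w)) :=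
    h2.congr' (hev.mono fun z hz => hz.symm)
  have := tendsto_nhds_unique h1 h3
  rw [this, sub_self, zero_pow (by omega), zero_mul]
lemma blaschke_sq (w ζ : ℂ) :
    ‖1 - (starRingEnd ℂ) w * ζ‖ ^ 2 =
      ‖ζ - w‖ ^ 2 + (1 - ‖ζ‖ ^ 2) * (1 - ‖w‖ ^ 2) := by
  simp only [Complex.sq_norm]
  simp only [Complex.normSq_apply, Complex.sub_re, Complex.sub_im, Complex.mul_re,
    Complex.mul_im, Complex.one_re, Complex.one_im, Complex.conj_re, Complex.conj_im]
  ring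

lemma bdd_step (g : ℂ → ℂ) (C : ℝ) (hC : 0 ≤ C)
    (hol : DifferentiableOn ℂ g (ball (0:ℂ) 1))
    (hb : ∀ w ∈ ball (0:ℂ) 1, ‖g w‖ ≤ C)
    (w₀ : ℂ) (hw₀ : w₀ ∈ ball (0:ℂ) 1) (hg0 : g w₀ = 0) :
    ∀ z ∈ ball (0:ℂ) 1,
      ‖dslope g w₀ z * (1 - (starRingEnd ℂ) w₀ * z)‖ ≤ C := by
  set g₁ : ℂ → ℂ := fun z => dslope g w₀ z * (1 - (starRingEnd ℂ) w₀ * z) with hg₁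
  have hd1 : DifferentiableOn ℂ (dslope g w₀) (ball (0:ℂ) 1) :=
    (Complex.differentiableOn_dslope (isOpen_ball.mem_nhds hw₀)).mpr hol
  have hdg₁ : DifferentiableOn ℂ g₁ (ball (0:ℂ) 1) :=
    hd1.mul (((differentiable_const (1:ℂ)).sub
      (differentiable_id.const_mul _)).differentiableOn)
  intro z hz
  rw [mem_ball_zero_iff] at hz hw₀
  set a := max ‖z‖ ‖w₀‖ with ha
  have ha1 : a < 1 := max_lt hz hw₀
  have key : ∀ r ∈ Set.Ioo a 1, ‖g₁ z‖ ≤ C * (1 + Real.sqrt (1 - r^2) / (r - ‖w₀‖)) := by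
    rintro r ⟨har, hr1⟩
    have hw₀r : ‖w₀‖ < r := lt_of_le_of_lt (le_max_right _ _) har
    have hr0 : (0:ℝ) < r := lt_of_le_of_lt (norm_nonneg w₀) hw₀r
    have hsub : closedBall (0:ℂ) r ⊆ ball (0:ℂ) 1 := closedBall_subset_ball hr1
    have hdc : DiffContOnCl ℂ g₁ (ball (0:ℂ) r) := by
      apply DifferentiableOn.diffContOnCl
      rw [closure_ball (0:ℂ) hr0.ne']
      exact hdg₁.mono hsub
    have hzc : z ∈ closure (ball (0:ℂ) r) := by
      rw [closure_ball (0:ℂ) hr0.ne']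
      exact mem_closedBall_zero_iff.mpr
        (le_of_lt (lt_of_le_of_lt (le_max_left _ _) har))
    refine Complex.norm_le_of_forall_mem_frontier_norm_le isBounded_ball hdc
      (fun ζ hζ => ?_) hzc
    rw [frontier_ball (0:ℂ) hr0.ne'] at hζ
    have hζr : ‖ζ‖ = r := mem_sphere_zero_iff_norm.mp hζ
    have hζw : ζ ≠ w₀ := fun h => absurd (h ▸ hζr) (by rintro rfl; exact lt_irrefl _ hw₀r)
    have hζball : ζ ∈ ball (0:ℂ) 1 := mem_ball_zero_iff.mpr (hζr ▸ hr1)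
    have heach : g₁ ζ = g ζ * (ζ - w₀)⁻¹ * (1 - (starRingEnd ℂ) w₀ * ζ) := by
      simp only [hg₁, dslope_of_ne _ hζw, slope, vsub_eq_sub, hg0, sub_zero, smul_eq_mul]
      ring
    rw [heach]
    have hden : r - ‖w₀‖ ≤ ‖ζ - w₀‖ := by
      have := norm_sub_norm_le ζ w₀; linarith [hζr ▸ this]
    have hdenpos : (0:ℝ) < ‖ζ - w₀‖ := lt_of_lt_of_le (by linarith) hden
    have hnum : ‖1 - (starRingEnd ℂ) w₀ * ζ‖ ≤ ‖ζ - w₀‖ + Real.sqrt (1 - r^2) := by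
      have h1 : ‖1 - (starRingEnd ℂ) w₀ * ζ‖^2 =
          ‖ζ - w₀‖^2 + (1 - ‖ζ‖^2) * (1 - ‖w₀‖^2) := by
        exact blaschke_sq w₀ ζ
      have hr2 : (0:ℝ) ≤ 1 - r^2 := by nlinarith
      have hs : Real.sqrt (1 - r^2)^2 = 1 - r^2 := Real.sq_sqrt hr2
      have h2 : ‖1 - (starRingEnd ℂ) w₀ * ζ‖^2 ≤ (‖ζ - w₀‖ + Real.sqrt (1 - r^2))^2 := by
        rw [h1, hζr]
        nlinarith [Real.sqrt_nonneg (1 - r^2), norm_nonneg (ζ - w₀), sq_nonneg ‖w₀‖]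
      calc ‖1 - (starRingEnd ℂ) w₀ * ζ‖ = Real.sqrt (‖1 - (starRingEnd ℂ) w₀ * ζ‖^2) :=
            (Real.sqrt_sq (norm_nonneg _)).symm
        _ ≤ Real.sqrt ((‖ζ - w₀‖ + Real.sqrt (1 - r^2))^2) := Real.sqrt_le_sqrt h2
        _ = _ := Real.sqrt_sq (by positivity)
    have hgζ : ‖g ζ‖ ≤ C := hb ζ hζball
    calc ‖g ζ * (ζ - w₀)⁻¹ * (1 - (starRingEnd ℂ) w₀ * ζ)‖
        = ‖g ζ‖ * ‖1 - (starRingEnd ℂ) w₀ * ζ‖ / ‖ζ - w₀‖ := by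
          rw [norm_mul, norm_mul, norm_inv]; ring
      _ ≤ C * (‖ζ - w₀‖ + Real.sqrt (1 - r^2)) / ‖ζ - w₀‖ := by
          gcongr
      _ = C * (1 + Real.sqrt (1 - r^2) / ‖ζ - w₀‖) := by
          rw [mul_div_assoc, add_div, div_self (ne_of_gt hdenpos)]
      _ ≤ C * (1 + Real.sqrt (1 - r^2) / (r - ‖w₀‖)) := by
          have h0 : (0:ℝ) < r - ‖w₀‖ := by linarith
          gcongr
  have hcont : Tendsto (fun r : ℝ => C * (1 + Real.sqrt (1 - r^2) / (r - ‖w₀‖)))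
      (nhdsWithin 1 (Set.Iio 1)) (nhds C) := by
    have h1 : ContinuousAt (fun r : ℝ => C * (1 + Real.sqrt (1 - r^2) / (r - ‖w₀‖))) 1 := by
      have hs : ContinuousAt (fun r : ℝ => Real.sqrt (1 - r^2)) 1 :=
        Real.continuous_sqrt.continuousAt.comp (by fun_prop)
      have hd : ContinuousAt (fun r : ℝ => r - ‖w₀‖) 1 := by fun_prop
      exact continuousAt_const.mul (continuousAt_const.add (hs.div hd (by show (1:ℝ) - ‖w₀‖ ≠ 0; intro h; linarith)))
    have hv : C * (1 + Real.sqrt (1 - (1:ℝ)^2) / (1 - ‖w₀‖)) = C := by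
      simp
    have := h1.tendsto.mono_left (nhdsWithin_le_nhds (s := Set.Iio 1))
    rwa [hv] at this
  exact ge_of_tendsto hcont
    (Filter.eventually_of_mem (Ioo_mem_nhdsLT_of_mem ⟨ha1, le_refl 1⟩) key)

lemma key : ∀ (n : ℕ) (g : ℂ → ℂ) (C : ℝ), 0 ≤ C →
    DifferentiableOn ℂ g (ball (0:ℂ) 1) →
    (∀ w ∈ ball (0:ℂ) 1, ‖g w‖ ≤ C) →
    ∀ (S : Finset ℂ) (m : ℂ → ℕ),
    (∀ w ∈ S, w ∈ ball (0:ℂ) 1 ∧ w ≠ 0 ∧ Vanish g w (m w)) →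
    (∑ w ∈ S, m w) = n →
    ‖g 0‖ ≤ C * ∏ w ∈ S, ‖w‖ ^ m w := by
  intro n
  induction n with
  | zero =>
    intro g C hC hol hb S m hS hsum
    have hone : ∏ w ∈ S, ‖w‖ ^ m w = 1 := Finset.prod_eq_one (fun w hw => by
      rw [Finset.sum_eq_zero_iff.mp hsum w hw, pow_zero])
    rw [hone, mul_one]
    exact hb 0 (mem_ball_self one_pos)
  | succ n ih =>
    intro g C hC hol hb S m hS hsum
    have hex : ∃ w₀ ∈ S, 1 ≤ m w₀ := by
      by_contra h
      push_neg at h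
      have : ∑ w ∈ S, m w = 0 := Finset.sum_eq_zero (fun w hw => by
        have := h w hw; omega)
      omega
    obtain ⟨w₀, hw₀S, hm₀⟩ := hex
    obtain ⟨hw₀b, hw₀0, hvan₀⟩ := hS w₀ hw₀S
    have hg0 : g w₀ = 0 := vanish_zero hm₀
      ((hol.differentiableAt (isOpen_ball.mem_nhds hw₀b)).continuousAt) hvan₀
    set g₁ : ℂ → ℂ := fun z => dslope g w₀ z * (1 - (starRingEnd ℂ) w₀ * z) with hg₁def
    have hd1 : DifferentiableOn ℂ (dslope g w₀) (ball (0:ℂ) 1) :=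
      (Complex.differentiableOn_dslope (isOpen_ball.mem_nhds hw₀b)).mpr hol
    have hdg₁ : DifferentiableOn ℂ g₁ (ball (0:ℂ) 1) :=
      hd1.mul (((differentiable_const (1:ℂ)).sub
        (differentiable_id.const_mul _)).differentiableOn)
    have hb₁ : ∀ w ∈ ball (0:ℂ) 1, ‖g₁ w‖ ≤ C := bdd_step g C hC hol hb w₀ hw₀b hg0
    have hg₁eq : ∀ z : ℂ, z ≠ w₀ →
        g₁ z = g z * (z - w₀)⁻¹ * (1 - (starRingEnd ℂ) w₀ * z) := by
      intro z hzw
      simp only [hg₁def, dslope_of_ne _ hzw, slope, vsub_eq_sub, hg0, sub_zero, smul_eq_mul]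
      ring
    set m' : ℂ → ℕ := Function.update m w₀ (m w₀ - 1) with hm'def
    have hS' : ∀ w ∈ S, w ∈ ball (0:ℂ) 1 ∧ w ≠ 0 ∧ Vanish g₁ w (m' w) := by
      intro w hwS
      obtain ⟨hwb, hw0, h, hh, hev⟩ := hS w hwS
      refine ⟨hwb, hw0, ?_⟩
      by_cases hww : w = w₀
      · subst hww
        refine ⟨fun z => h z * (1 - (starRingEnd ℂ) w * z),
          hh.mul (analyticAt_const.sub (analyticAt_const.mul analyticAt_id)), ?_⟩
        rw [hm'def]
        simp only [Function.update_self]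
        filter_upwards [hev, self_mem_nhdsWithin] with z hz hz2
        have hzw : z ≠ w := hz2
        have hne : (z - w) ≠ 0 := sub_ne_zero.mpr hzw
        rw [hg₁eq z hzw, hz]
        have hpow : (z - w) ^ m w = (z - w) ^ (m w - 1) * (z - w) := by
          rw [← pow_succ]; congr 1; omega
        rw [hpow]
        field_simp
      · refine ⟨fun z => h z * ((1 - (starRingEnd ℂ) w₀ * z) * (z - w₀)⁻¹),
          hh.mul ((analyticAt_const.sub (analyticAt_const.mul analyticAt_id)).mul
            (((analyticAt_id.sub analyticAt_const)).inv (sub_ne_zero.mpr hww))), ?_⟩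
        rw [hm'def]
        simp only [Function.update_of_ne hww]
        have hzw₀ev : ∀ᶠ z in nhdsWithin w {w}ᶜ, z ≠ w₀ :=
          Filter.Eventually.filter_mono nhdsWithin_le_nhds (eventually_ne_nhds hww)
        filter_upwards [hev, hzw₀ev] with z hz hzw₀
        rw [hg₁eq z hzw₀, hz]
        ring
    have hsum' : ∑ w ∈ S, m' w = n := by
      rw [hm'def, Finset.sum_update_of_mem hw₀S]
      have h2 : ∑ w ∈ S, m w = m w₀ + ∑ w ∈ S.erase w₀, m w :=
        (Finset.add_sum_erase S m hw₀S).symm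
      rw [Finset.erase_eq] at h2
      omega
    have hIH := ih g₁ C hC hdg₁ hb₁ S m' hS' hsum'
    have h0ne : (0:ℂ) ≠ w₀ := Ne.symm hw₀0
    have hw₀n : ‖w₀‖ ≠ 0 := norm_ne_zero_iff.mpr hw₀0
    have hg₁0 : ‖g₁ 0‖ = ‖g 0‖ / ‖w₀‖ := by
      rw [hg₁eq 0 h0ne]
      simp [norm_mul, norm_inv, div_eq_mul_inv]
    have hprod : ∏ w ∈ S, ‖w‖ ^ m w = ‖w₀‖ * ∏ w ∈ S, ‖w‖ ^ m' w := by
      rw [← Finset.mul_prod_erase S (fun w => ‖w‖ ^ m w) hw₀S,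
        ← Finset.mul_prod_erase S (fun w => ‖w‖ ^ m' w) hw₀S]
      have hm'w₀ : m' w₀ = m w₀ - 1 := by rw [hm'def, Function.update_self]
      have hsame : ∏ w ∈ S.erase w₀, ‖w‖ ^ m' w = ∏ w ∈ S.erase w₀, ‖w‖ ^ m w :=
        Finset.prod_congr rfl (fun w hw => by
          rw [hm'def, Function.update_of_ne (Finset.ne_of_mem_erase hw)])
      rw [hsame, hm'w₀, ← mul_assoc]
      congr 1
      conv_lhs => rw [show m w₀ = (m w₀ - 1) + 1 by omega]
      rw [pow_succ]
      ring
    calc ‖g 0‖ = ‖w₀‖ * ‖g₁ 0‖ := by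
          rw [hg₁0, mul_comm]
          exact (div_mul_cancel₀ _ hw₀n).symm
      _ ≤ ‖w₀‖ * (C * ∏ w ∈ S, ‖w‖ ^ m' w) :=
          mul_le_mul_of_nonneg_left hIH (norm_nonneg _)
      _ = C * ∏ w ∈ S, ‖w‖ ^ m w := by rw [hprod]; ring


theorem blaschke_condition (g : ℂ → ℂ) (B : ℝ) (hB : 0 < B)
    (hol : DifferentiableOn ℂ g (ball (0 : ℂ) 1))
    (h0 : g 0 = 1)
    (hbound : ∀ w ∈ ball (0 : ℂ) 1, ‖g w‖ ≤ Real.exp B)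
    (mult : ℂ → ℕ)
    (hmult : ∀ w ∈ ball (0 : ℂ) 1, ∃ h : ℂ → ℂ, AnalyticAt ℂ h w ∧ h w ≠ 0 ∧
      ∀ᶠ z in nhds w, g z = (z - w) ^ (mult w) * h z) :
    ∑' w : {w : ℂ // w ∈ ball (0 : ℂ) 1},
        (mult w : ENNReal) * ENNReal.ofReal (1 - ‖(w : ℂ)‖) ≤
      ENNReal.ofReal B := by
  have h0ball : (0:ℂ) ∈ ball (0:ℂ) 1 := mem_ball_self one_pos
  have hmult0 : mult 0 = 0 := by
    obtain ⟨h, hh, hne0, hev⟩ := hmult 0 h0ball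
    have hpt := hev.self_of_nhds
    rw [h0, sub_self] at hpt
    by_contra hne
    rw [zero_pow hne, zero_mul] at hpt
    exact one_ne_zero hpt
  rw [ENNReal.tsum_eq_iSup_sum]
  refine iSup_le fun F => ?_
  set f : ℂ → ℝ := fun x => (mult x : ℝ) * (1 - ‖x‖) with hfdef
  set S : Finset ℂ := (F.image Subtype.val).erase 0 with hSdef
  have hSball : ∀ x ∈ S, x ∈ ball (0:ℂ) 1 := by
    intro x hx
    obtain ⟨w, hwF, rfl⟩ := Finset.mem_image.mp (Finset.mem_of_mem_erase hx)
    exact w.2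
  have hSne : ∀ x ∈ S, x ≠ 0 := fun x hx => Finset.ne_of_mem_erase hx
  have hreal : ∑ x ∈ S, f x ≤ B := by
    have hkey := key (∑ x ∈ S, mult x) g (Real.exp B) (Real.exp_pos B).le
      hol (fun w hw => by exact hbound w hw) S mult
      (fun w hw => ⟨hSball w hw, hSne w hw, by
        obtain ⟨h, hh, hne0, hev⟩ := hmult w (hSball w hw)
        exact ⟨h, hh, hev.filter_mono nhdsWithin_le_nhds⟩⟩) rfl
    rw [h0, norm_one] at hkey
    set P : ℝ := ∏ x ∈ S, ‖x‖ ^ mult x with hPdef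
    have hP : (0:ℝ) < P :=
      Finset.prod_pos fun x hx => pow_pos (norm_pos_iff.mpr (hSne x hx)) _
    have h1 : Real.exp (-B) ≤ P := by
      rw [Real.exp_neg, ← one_div]
      rw [div_le_iff₀ (Real.exp_pos B)]
      linarith [hkey, mul_comm P (Real.exp B)]
    have hlog : -B ≤ Real.log P := by
      have := Real.log_le_log (Real.exp_pos _) h1
      rwa [Real.log_exp] at this
    have hlogP : Real.log P = ∑ x ∈ S, (mult x : ℝ) * Real.log ‖x‖ := by
      rw [hPdef, Real.log_prod
        (fun x hx => pow_ne_zero _ (norm_ne_zero_iff.mpr (hSne x hx)))]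
      exact Finset.sum_congr rfl fun x hx => by rw [Real.log_pow]
    have hsum2 : ∑ x ∈ S, (f x + (mult x : ℝ) * Real.log ‖x‖) ≤ 0 := by
      apply Finset.sum_nonpos
      intro x hx
      have hxpos : (0:ℝ) < ‖x‖ := norm_pos_iff.mpr (hSne x hx)
      have hle := Real.log_le_sub_one_of_pos hxpos
      have habs : ‖x‖ = ‖x‖ := rfl
      have hmn : (0:ℝ) ≤ (mult x : ℝ) := Nat.cast_nonneg _
      rw [hfdef]
      simp only
      rw [← mul_add]
      apply mul_nonpos_of_nonneg_of_nonpos hmn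
      linarith
    rw [Finset.sum_add_distrib, ← hlogP] at hsum2
    linarith
  have hf0 : f 0 = 0 := by simp [hfdef, hmult0]
  have hFsum : ∑ w ∈ F, f (w : ℂ) = ∑ x ∈ S, f x := by
    rw [hSdef, Finset.sum_erase _ hf0, Finset.sum_image
      (fun x _ y _ h => Subtype.ext h)]
  have hnn : ∀ w : {w : ℂ // w ∈ ball (0:ℂ) 1}, 0 ≤ f (w : ℂ) := by
    intro w
    have hw1 : ‖(w : ℂ)‖ < 1 := by
      have := mem_ball_zero_iff.mp w.2
      exact this
    exact mul_nonneg (Nat.cast_nonneg _) (by linarith)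
  calc ∑ w ∈ F, (mult (w : ℂ) : ENNReal) * ENNReal.ofReal (1 - ‖(w : ℂ)‖)
      = ∑ w ∈ F, ENNReal.ofReal (f (w : ℂ)) := by
        refine Finset.sum_congr rfl fun w _ => ?_
        rw [hfdef]
        simp only
        rw [ENNReal.ofReal_mul (Nat.cast_nonneg _), ENNReal.ofReal_natCast]
    _ = ENNReal.ofReal (∑ w ∈ F, f (w : ℂ)) :=
        (ENNReal.ofReal_sum_of_nonneg (fun w _ => hnn w)).symm
    _ ≤ ENNReal.ofReal B := ENNReal.ofReal_le_ofReal (hFsum ▸ hreal)
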